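/- Fix x ∈ ℝⁿ, assume every node has degree mᵢ ≥ 1 and F has full column rank, and let ρ₀ ∈ (0,1). Then the function ρ ↦ T(x,ρ) is differentiable at ρ₀ with derivative equal to −s(ρ₀)ᵀ W s(ρ₀), where s(ρ₀) = [Iₙ − F(Fᵀ(D−ρ₀W)F)⁻¹Fᵀ(D−ρ₀W)]x. -/

import Mathlib

open Matrix

/-- Degree of node `i`: `mᵢ = ∑ⱼ Wᵢⱼ`. -/
noncomputable def degVec {n : ℕ} (W : Matrix (Fin n) (Fin n) ℝ) (i : Fin n) : ℝ := ∑ j, W i j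

/-- `R(ρ) = D - ρ W` where `D = diag(m₁,…,mₙ)`. -/
noncomputable def Rmat {n : ℕ} (W : Matrix (Fin n) (Fin n) ℝ) (ρ : ℝ) :
    Matrix (Fin n) (Fin n) ℝ :=
  Matrix.diagonal (degVec W) - ρ • W

/-- `K(ρ) = (D-ρW) - (D-ρW)F[Fᵀ(D-ρW)F]⁻¹Fᵀ(D-ρW)`. -/
noncomputable def Kmat {n p : ℕ} (W : Matrix (Fin n) (Fin n) ℝ)
    (F : Matrix (Fin n) (Fin (p + 1)) ℝ) (ρ : ℝ) : Matrix (Fin n) (Fin n) ℝ :=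
  Rmat W ρ - Rmat W ρ * F * (Fᵀ * Rmat W ρ * F)⁻¹ * Fᵀ * Rmat W ρ

/-- `T(x,ρ) = xᵀ K(ρ) x`. -/
noncomputable def Tcrit {n p : ℕ} (W : Matrix (Fin n) (Fin n) ℝ)
    (F : Matrix (Fin n) (Fin (p + 1)) ℝ) (x : Fin n → ℝ) (ρ : ℝ) : ℝ :=
  x ⬝ᵥ (Kmat W F ρ).mulVec x


/-- The residual vector `s(ρ) = [Iₙ - F(Fᵀ(D-ρW)F)⁻¹Fᵀ(D-ρW)]x`. -/
noncomputable def sresid {n p : ℕ} (W : Matrix (Fin n) (Fin n) ℝ)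
    (F : Matrix (Fin n) (Fin (p + 1)) ℝ) (x : Fin n → ℝ) (ρ : ℝ) : Fin n → ℝ :=
  ((1 : Matrix (Fin n) (Fin n) ℝ) - F * (Fᵀ * Rmat W ρ * F)⁻¹ * Fᵀ * Rmat W ρ).mulVec x

lemma Rmat_transpose {n : ℕ} (W : Matrix (Fin n) (Fin n) ℝ) (hWsymm : W.IsSymm) (ρ : ℝ) :
    (Rmat W ρ)ᵀ = Rmat W ρ := by
  simp [Rmat, transpose_sub, transpose_smul, diagonal_transpose, hWsymm.eq]

lemma Rmat_posDef {n : ℕ} (W : Matrix (Fin n) (Fin n) ℝ) (hWsymm : W.IsSymm)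
    (hW01 : ∀ i j, W i j = 0 ∨ W i j = 1) (hdeg : ∀ i, 1 ≤ degVec W i)
    {ρ : ℝ} (hρ0 : 0 ≤ ρ) (hρ1 : ρ < 1) : (Rmat W ρ).PosDef := by
  rw [Matrix.posDef_iff_dotProduct_mulVec]
  constructor
  · rw [Matrix.IsHermitian]
    rw [show (Rmat W ρ)ᴴ = (Rmat W ρ)ᵀ from rfl]  -- over ℝ, star is id
    exact Rmat_transpose W hWsymm ρ
  · intro v hv
    have hstar : star v = v := by simp
    rw [hstar]
    have hWnn : ∀ i j, 0 ≤ W i j := fun i j => by rcases hW01 i j with h | h <;> simp [h]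
    have expand : v ⬝ᵥ (Rmat W ρ) *ᵥ v
        = (∑ i, degVec W i * v i ^ 2) - ρ * (v ⬝ᵥ W *ᵥ v) := by
      simp only [Rmat, sub_mulVec, smul_mulVec, dotProduct_sub, dotProduct_smul,
        smul_eq_mul]
      congr 1
      simp only [dotProduct, mulVec_diagonal]
      exact Finset.sum_congr rfl fun i _ => by ring
    have hdot : v ⬝ᵥ W *ᵥ v = ∑ i, ∑ j, W i j * (v i * v j) := by
      simp only [dotProduct, mulVec, Finset.mul_sum]
      exact Finset.sum_congr rfl fun i _ => Finset.sum_congr rfl fun j _ => by ring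
    have hrow : ∀ i, ∑ j, W i j * v i ^ 2 = degVec W i * v i ^ 2 := by
      intro i; rw [degVec, Finset.sum_mul]
    have hswap : ∑ i, ∑ j, W i j * v j ^ 2 = ∑ i, degVec W i * v i ^ 2 := by
      rw [Finset.sum_comm]
      refine Finset.sum_congr rfl fun j _ => ?_
      rw [degVec, Finset.sum_mul]
      exact Finset.sum_congr rfl fun i _ => by rw [hWsymm.apply]
    have h0 : 0 ≤ ∑ i, ∑ j, W i j * (v i - v j) ^ 2 :=
      Finset.sum_nonneg fun i _ => Finset.sum_nonneg fun j _ =>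
        mul_nonneg (hWnn i j) (sq_nonneg _)
    have e1 : ∑ i, ∑ j, W i j * (v i - v j) ^ 2
        = (∑ i, degVec W i * v i ^ 2) + (∑ i, degVec W i * v i ^ 2)
          - 2 * (v ⬝ᵥ W *ᵥ v) := by
      have : ∀ i : Fin n, ∑ j, W i j * (v i - v j) ^ 2
          = (∑ j, W i j * v i ^ 2) + (∑ j, W i j * v j ^ 2)
            - 2 * (∑ j, W i j * (v i * v j)) := by
        intro i
        rw [Finset.mul_sum, ← Finset.sum_add_distrib, ← Finset.sum_sub_distrib]
        exact Finset.sum_congr rfl fun j _ => by ring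
      rw [Finset.sum_congr rfl fun i _ => this i, Finset.sum_sub_distrib,
        Finset.sum_add_distrib, Finset.sum_congr rfl (fun i _ => hrow i), hswap,
        ← Finset.mul_sum, ← hdot]

    have hvsq : 0 < ∑ i, v i ^ 2 := by
      obtain ⟨i, hi⟩ := Function.ne_iff.mp hv
      exact Finset.sum_pos' (fun j _ => sq_nonneg _)
        ⟨i, Finset.mem_univ i, sq_pos_iff.mpr hi⟩
    have hm : (∑ i, v i ^ 2) ≤ ∑ i, degVec W i * v i ^ 2 :=
      Finset.sum_le_sum fun i _ => by nlinarith [hdeg i, sq_nonneg (v i)]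
    rw [expand]
    nlinarith [mul_nonneg hρ0 (by linarith : (0:ℝ) ≤ (∑ i, degVec W i * v i ^ 2) - v ⬝ᵥ W *ᵥ v),
      mul_pos (by linarith : (0:ℝ) < 1 - ρ) (lt_of_lt_of_le hvsq hm)]

lemma mulVec_injective_of_rank {n p : ℕ} (F : Matrix (Fin n) (Fin (p + 1)) ℝ)
    (hF : F.rank = p + 1) : Function.Injective F.mulVec := by
  have h2 := LinearMap.finrank_range_add_finrank_ker F.mulVecLin
  have h3 : Module.finrank ℝ (Fin (p+1) → ℝ) = p + 1 := by simp
  rw [h3] at h2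
  have h4 : Matrix.rank F = Module.finrank ℝ (LinearMap.range F.mulVecLin) := rfl
  rw [← h4, hF] at h2
  have hk : Module.finrank ℝ (LinearMap.ker F.mulVecLin) = 0 := by omega
  have hker : LinearMap.ker F.mulVecLin = ⊥ := Submodule.finrank_eq_zero.mp hk
  have hinj := LinearMap.ker_eq_bot.mp hker
  intro a b hab
  exact hinj (by simpa [Matrix.mulVecLin_apply] using hab)

/-- `ρ ↦ T(x,ρ)` is differentiable at `ρ₀ ∈ (0,1)` with derivative
`-s(ρ₀)ᵀ W s(ρ₀)`. -/
theorem hasDerivAt_T {n p : ℕ} (W : Matrix (Fin n) (Fin n) ℝ)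
    (hWsymm : W.IsSymm) (hW01 : ∀ i j, W i j = 0 ∨ W i j = 1) (hWdiag : ∀ i, W i i = 0)
    (hdeg : ∀ i, 1 ≤ degVec W i)
    (F : Matrix (Fin n) (Fin (p + 1)) ℝ) (hF : F.rank = p + 1)
    (x : Fin n → ℝ) (ρ₀ : ℝ) (hρ₀ : ρ₀ ∈ Set.Ioo (0 : ℝ) 1) :
    HasDerivAt (fun ρ => Tcrit W F x ρ)
      (-(sresid W F x ρ₀ ⬝ᵥ W.mulVec (sresid W F x ρ₀))) ρ₀ := by
  classical
  obtain ⟨hρ0, hρ1⟩ := hρ₀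
  have hRpd : ∀ ρ : ℝ, 0 ≤ ρ → ρ < 1 → (Rmat W ρ).PosDef := fun ρ h1 h2 =>
    Rmat_posDef W hWsymm hW01 hdeg h1 h2
  have hFinj : Function.Injective F.mulVec := mulVec_injective_of_rank F hF
  set A : Matrix (Fin n) (Fin n) ℝ := Matrix.diagonal (degVec W) with hA
  set C₁ : Matrix (Fin (p+1)) (Fin (p+1)) ℝ := Fᵀ * W * F with hC₁
  set Bf : (ρ : ℝ) → Matrix (Fin (p+1)) (Fin (p+1)) ℝ := fun ρ => Fᵀ * Rmat W ρ * F with hBf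
  have hRsymm : ∀ ρ : ℝ, (Rmat W ρ)ᵀ = Rmat W ρ := Rmat_transpose W hWsymm
  have hBaff : ∀ ρ : ℝ, Bf ρ = (Fᵀ * A * F) - ρ • C₁ := by
    intro ρ
    simp only [hBf, hC₁, hA, Rmat, Matrix.mul_sub, Matrix.sub_mul, Matrix.mul_smul,
      Matrix.smul_mul]
  have hBsym : ∀ ρ : ℝ, (Bf ρ)ᵀ = Bf ρ := by
    intro ρ
    rw [hBf]
    simp only [Matrix.transpose_mul, Matrix.transpose_transpose, hRsymm, Matrix.mul_assoc]
  have hBpd : (Bf ρ₀).PosDef := by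
    rw [Matrix.posDef_iff_dotProduct_mulVec]
    constructor
    · show (Bf ρ₀)ᴴ = Bf ρ₀
      ext i j
      rw [Matrix.conjTranspose_apply]
      rw [show star ((Bf ρ₀) j i) = (Bf ρ₀) j i from rfl]
      conv_rhs => rw [← hBsym ρ₀]
      rfl
    · intro v hv
      rw [show star v = v from rfl]
      have h2 : v ⬝ᵥ (Bf ρ₀) *ᵥ v = (F *ᵥ v) ⬝ᵥ (Rmat W ρ₀) *ᵥ (F *ᵥ v) := by
        rw [hBf]
        rw [← Matrix.mulVec_mulVec, ← Matrix.mulVec_mulVec,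
          Matrix.dotProduct_mulVec v Fᵀ, Matrix.vecMul_transpose]
      rw [h2]
      have hFv : F *ᵥ v ≠ 0 := fun hc => hv (hFinj (by simpa using hc))
      have h3 := (hRpd ρ₀ hρ0.le hρ1).dotProduct_mulVec_pos hFv
      rwa [show star (F *ᵥ v) = F *ᵥ v from rfl] at h3
  have hu : IsUnit (Bf ρ₀) := hBpd.isUnit
  set N : Matrix (Fin (p+1)) (Fin (p+1)) ℝ := (Bf ρ₀)⁻¹ with hN
  have hNsym : Nᵀ = N := by rw [hN, Matrix.transpose_nonsing_inv, hBsym]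
  letI : NormedRing (Matrix (Fin (p+1)) (Fin (p+1)) ℝ) := Matrix.linftyOpNormedRing
  letI : NormedAlgebra ℝ (Matrix (Fin (p+1)) (Fin (p+1)) ℝ) := Matrix.linftyOpNormedAlgebra
  letI : CompleteSpace (Matrix (Fin (p+1)) (Fin (p+1)) ℝ) := FiniteDimensional.complete ℝ _
  have hBder : HasDerivAt Bf (-C₁) ρ₀ := by
    have h := ((hasDerivAt_id ρ₀).smul_const C₁).const_sub (Fᵀ * A * F)
    simp only [one_smul, id_eq] at h
    have hfun : (fun ρ : ℝ => (Fᵀ * A * F) - ρ • C₁) = Bf := funext fun ρ => (hBaff ρ).symm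
    rwa [hfun] at h
  have hNder : HasDerivAt (fun ρ => (Bf ρ)⁻¹) (N * C₁ * N) ρ₀ := by
    have hinv := hasFDerivAt_ringInverse (𝕜 := ℝ) hu.unit
    rw [hu.unit_spec] at hinv
    have hcomp := hinv.comp_hasDerivAt ρ₀ hBder
    have hcoe : (↑hu.unit⁻¹ : Matrix (Fin (p+1)) (Fin (p+1)) ℝ) = N := by
      rw [Matrix.coe_units_inv, hu.unit_spec]
    have hfe : (fun ρ => (Bf ρ)⁻¹) = Ring.inverse ∘ Bf :=
      funext fun ρ => Matrix.nonsing_inv_eq_ringInverse _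
    rw [hfe]
    refine hcomp.congr_deriv ?_
    rw [hcoe]
    simp [ContinuousLinearMap.mulLeftRight_apply]
  have hentry : ∀ i j, HasDerivAt (fun ρ => (Bf ρ)⁻¹ i j) ((N * C₁ * N) i j) ρ₀ := by
    intro i j
    have hclm := (LinearMap.toContinuousLinearMap
      (Matrix.entryLinearMap ℝ ℝ i j :
        Matrix (Fin (p+1)) (Fin (p+1)) ℝ →ₗ[ℝ] ℝ)).hasFDerivAt
      (x := (Bf ρ₀)⁻¹)
    have := hclm.comp_hasDerivAt ρ₀ hNder
    simp [Matrix.entryLinearMap, Function.comp_def] at this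
    exact this
  -- the vector u ρ = Fᵀ R(ρ) x
  set uv : (ρ : ℝ) → (Fin (p+1) → ℝ) := fun ρ => (Fᵀ * Rmat W ρ) *ᵥ x with huv
  set u₁ : Fin (p+1) → ℝ := (Fᵀ * W) *ᵥ x with hu₁
  set u₀ : Fin (p+1) → ℝ := (Fᵀ * A) *ᵥ x with hu₀
  have huaff : ∀ ρ : ℝ, uv ρ = u₀ - ρ • u₁ := by
    intro ρ
    rw [huv]
    simp only [Rmat, ← hA, Matrix.mul_sub, Matrix.mul_smul, Matrix.sub_mulVec,
      Matrix.smul_mulVec]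
    rfl
  have huder : ∀ i, HasDerivAt (fun ρ => uv ρ i) (-(u₁ i)) ρ₀ := by
    intro i
    have h : HasDerivAt (fun ρ : ℝ => u₀ i - ρ * u₁ i) (-(u₁ i)) ρ₀ := by
      simpa using ((hasDerivAt_id ρ₀).mul_const (u₁ i)).const_sub (u₀ i)
    have hfun : (fun ρ : ℝ => u₀ i - ρ * u₁ i) = fun ρ => uv ρ i := by
      funext ρ
      rw [huaff ρ]
      simp
    rwa [hfun] at h
  -- derivative of the scalar correction term
  have hphi : HasDerivAt (fun ρ => (uv ρ) ⬝ᵥ ((Bf ρ)⁻¹ *ᵥ (uv ρ)))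
      (∑ i, ∑ j, ((-(u₁ i)) * (N i j * uv ρ₀ j)
        + uv ρ₀ i * ((N * C₁ * N) i j * uv ρ₀ j + N i j * (-(u₁ j))))) ρ₀ := by
    have hrw : (fun ρ => (uv ρ) ⬝ᵥ ((Bf ρ)⁻¹ *ᵥ (uv ρ)))
        = fun ρ => ∑ i, ∑ j, (uv ρ i) * ((Bf ρ)⁻¹ i j * (uv ρ j)) := by
      funext ρ
      simp [dotProduct, mulVec, Finset.mul_sum]
    rw [hrw]
    refine HasDerivAt.fun_sum fun i _ => ?_
    refine HasDerivAt.fun_sum fun j _ => ?_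
    exact (huder i).mul ((hentry i j).mul (huder j))
  -- rewrite of T
  have hfirst : ∀ ρ : ℝ, x ⬝ᵥ (Rmat W ρ) *ᵥ x = x ⬝ᵥ A *ᵥ x - ρ * (x ⬝ᵥ W *ᵥ x) := by
    intro ρ
    simp only [Rmat, ← hA, Matrix.sub_mulVec, Matrix.smul_mulVec, dotProduct_sub,
      dotProduct_smul, smul_eq_mul]
  have hsecond : ∀ ρ : ℝ, x ⬝ᵥ (Rmat W ρ * F * (Bf ρ)⁻¹ * Fᵀ * Rmat W ρ) *ᵥ x
      = (uv ρ) ⬝ᵥ ((Bf ρ)⁻¹ *ᵥ (uv ρ)) := by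
    intro ρ
    have h1 : Rmat W ρ * F * (Bf ρ)⁻¹ * Fᵀ * Rmat W ρ
        = (Fᵀ * Rmat W ρ)ᵀ * ((Bf ρ)⁻¹ * (Fᵀ * Rmat W ρ)) := by
      rw [Matrix.transpose_mul, Matrix.transpose_transpose, hRsymm]
      simp only [Matrix.mul_assoc]
    rw [h1, ← Matrix.mulVec_mulVec, Matrix.dotProduct_mulVec, Matrix.vecMul_transpose]
    have h2 : ((Bf ρ)⁻¹ * (Fᵀ * Rmat W ρ)) *ᵥ x
        = (Bf ρ)⁻¹ *ᵥ ((Fᵀ * Rmat W ρ) *ᵥ x) := (Matrix.mulVec_mulVec _ _ _).symm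
    rw [h2, Matrix.mulVec_mulVec]
  -- helper dot-product identities
  have hWe : ∀ a b : Fin n → ℝ, (W *ᵥ a) ⬝ᵥ b = a ⬝ᵥ W *ᵥ b := by
    intro a b
    conv_lhs => rw [← hWsymm.eq]
    rw [Matrix.mulVec_transpose, ← Matrix.dotProduct_mulVec]
  have hFt : ∀ (a : Fin n → ℝ) (b : Fin (p+1) → ℝ), (Fᵀ *ᵥ a) ⬝ᵥ b = a ⬝ᵥ F *ᵥ b := by
    intro a b
    rw [Matrix.mulVec_transpose, ← Matrix.dotProduct_mulVec]
  have hNd : ∀ a b : Fin (p+1) → ℝ, a ⬝ᵥ N *ᵥ b = (N *ᵥ a) ⬝ᵥ b := by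
    intro a b
    rw [Matrix.dotProduct_mulVec, ← Matrix.mulVec_transpose, hNsym]
  set y : Fin n → ℝ := F *ᵥ (N *ᵥ uv ρ₀) with hy
  have key1 : u₁ ⬝ᵥ N *ᵥ uv ρ₀ = x ⬝ᵥ W *ᵥ y := by
    rw [hu₁, ← Matrix.mulVec_mulVec, hFt, ← hWe]
  have key2 : uv ρ₀ ⬝ᵥ N *ᵥ u₁ = y ⬝ᵥ W *ᵥ x := by
    rw [hNd, hu₁, ← Matrix.mulVec_mulVec, Matrix.dotProduct_mulVec, Matrix.vecMul_transpose]
  have key3 : uv ρ₀ ⬝ᵥ (N * C₁ * N) *ᵥ uv ρ₀ = y ⬝ᵥ W *ᵥ y := by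
    rw [← Matrix.mulVec_mulVec, ← Matrix.mulVec_mulVec, hNd, hC₁,
      ← Matrix.mulVec_mulVec, ← Matrix.mulVec_mulVec,
      Matrix.dotProduct_mulVec, Matrix.vecMul_transpose]
  have hdm : ∀ (a b : Fin (p+1) → ℝ) (M : Matrix (Fin (p+1)) (Fin (p+1)) ℝ),
      ∑ i, ∑ j, a i * (M i j * b j) = a ⬝ᵥ M *ᵥ b := by
    intro a b M
    simp [dotProduct, mulVec, Finset.mul_sum]
  have hDval : (∑ i, ∑ j, ((-(u₁ i)) * (N i j * uv ρ₀ j)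
        + uv ρ₀ i * ((N * C₁ * N) i j * uv ρ₀ j + N i j * (-(u₁ j)))))
      = -(u₁ ⬝ᵥ N *ᵥ uv ρ₀) + ((uv ρ₀ ⬝ᵥ (N * C₁ * N) *ᵥ uv ρ₀) - (uv ρ₀ ⬝ᵥ N *ᵥ u₁)) := by
    have e : ∀ i j, (-(u₁ i)) * (N i j * uv ρ₀ j)
        + uv ρ₀ i * ((N * C₁ * N) i j * uv ρ₀ j + N i j * (-(u₁ j)))
        = -(u₁ i * (N i j * uv ρ₀ j))
          + (uv ρ₀ i * ((N * C₁ * N) i j * uv ρ₀ j)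
            - uv ρ₀ i * (N i j * u₁ j)) := by
      intro i j; ring
    calc (∑ i, ∑ j, ((-(u₁ i)) * (N i j * uv ρ₀ j)
        + uv ρ₀ i * ((N * C₁ * N) i j * uv ρ₀ j + N i j * (-(u₁ j)))))
        = (∑ i, ∑ j, -(u₁ i * (N i j * uv ρ₀ j)))
          + ((∑ i, ∑ j, uv ρ₀ i * ((N * C₁ * N) i j * uv ρ₀ j))
            - ∑ i, ∑ j, uv ρ₀ i * (N i j * u₁ j)) := by
          rw [← Finset.sum_sub_distrib, ← Finset.sum_add_distrib]
          refine Finset.sum_congr rfl fun i _ => ?_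
          rw [← Finset.sum_sub_distrib, ← Finset.sum_add_distrib]
          exact Finset.sum_congr rfl fun j _ => by ring
      _ = -(u₁ ⬝ᵥ N *ᵥ uv ρ₀) + ((uv ρ₀ ⬝ᵥ (N * C₁ * N) *ᵥ uv ρ₀)
            - (uv ρ₀ ⬝ᵥ N *ᵥ u₁)) := by
          simp only [Finset.sum_neg_distrib, hdm]
  -- rewrite T as explicit function of ρ
  have hTeq : (fun ρ => Tcrit W F x ρ)
      = fun ρ => (x ⬝ᵥ A *ᵥ x - ρ * (x ⬝ᵥ W *ᵥ x)) - (uv ρ) ⬝ᵥ ((Bf ρ)⁻¹ *ᵥ (uv ρ)) := by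
    funext ρ
    show x ⬝ᵥ (Kmat W F ρ) *ᵥ x = _
    rw [Kmat, Matrix.sub_mulVec, dotProduct_sub, hfirst ρ]
    congr 1
    exact hsecond ρ
  have hfirstder : HasDerivAt (fun ρ : ℝ => x ⬝ᵥ A *ᵥ x - ρ * (x ⬝ᵥ W *ᵥ x))
      (-(x ⬝ᵥ W *ᵥ x)) ρ₀ := by
    simpa using ((hasDerivAt_id ρ₀).mul_const (x ⬝ᵥ W *ᵥ x)).const_sub (x ⬝ᵥ A *ᵥ x)
  rw [hTeq]
  have hTder := hfirstder.sub hphi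
  refine hTder.congr_deriv ?_
  rw [hDval]
  -- identify the residual
  have hs : sresid W F x ρ₀ = x - y := by
    rw [sresid, Matrix.sub_mulVec, Matrix.one_mulVec]
    congr 1
    have e1 : (F * (Fᵀ * Rmat W ρ₀ * F)⁻¹ * Fᵀ * Rmat W ρ₀) *ᵥ x
        = F *ᵥ ((Fᵀ * Rmat W ρ₀ * F)⁻¹ *ᵥ ((Fᵀ * Rmat W ρ₀) *ᵥ x)) := by
      rw [Matrix.mulVec_mulVec, Matrix.mulVec_mulVec]
      simp only [Matrix.mul_assoc]
    rw [e1, hy]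
  rw [hs, Matrix.mulVec_sub, dotProduct_sub, sub_dotProduct, sub_dotProduct,
    key1, key2, key3]
  ring
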